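/- For a connected simple non-bipartite graph G and u ≠ 1: if n_E > n_V then q = −(1−u)^{-1} is a pole of ζ_G(q,u) of order exactly n_E − n_V, and if n_E = n_V then q = −(1−u)^{-1} is not a pole. -/

import Mathlib

open Matrix Polynomial Finset

section Aux

variable {V : Type*} [Fintype V] [DecidableEq V]
variable (G : SimpleGraph V) [DecidableRel G.Adj]

/-- Quadratic form of the signless Laplacian. -/
lemma signless_quadform (x : V → ℝ) :
    x ⬝ᵥ ((G.degMatrix ℝ + G.adjMatrix ℝ) *ᵥ x) =
    (∑ i : V, ∑ j : V, if G.Adj i j then (x i + x j) ^ 2 else 0) / 2 := by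
  simp_rw [add_mulVec, dotProduct_add, SimpleGraph.dotProduct_mulVec_degMatrix,
    SimpleGraph.dotProduct_mulVec_adjMatrix, ← sum_add_distrib,
    SimpleGraph.degree_eq_sum_if_adj, sum_mul, ite_mul, one_mul, zero_mul,
    ← sum_add_distrib, ite_add_ite, add_zero]
  rw [← add_self_div_two (∑ x_1 : V, ∑ x_2 : V, _)]
  conv_lhs => enter [1,2,2,i,2,j]; rw [if_congr (SimpleGraph.adj_comm G i j) rfl rfl]
  conv_lhs => enter [1,2]; rw [Finset.sum_comm]
  simp_rw [← sum_add_distrib, ite_add_ite]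
  congr 2 with i
  congr 2 with j
  ring_nf

lemma signless_ker (hconn : G.Connected) (hnb : ¬ G.Colorable 2)
    (x : V → ℝ) (hx : (G.degMatrix ℝ + G.adjMatrix ℝ) *ᵥ x = 0) : x = 0 := by
  have hq : x ⬝ᵥ ((G.degMatrix ℝ + G.adjMatrix ℝ) *ᵥ x) = 0 := by
    rw [hx, dotProduct_zero]
  rw [signless_quadform] at hq
  have hadj : ∀ i j : V, G.Adj i j → x i = -x j := by
    have h0 : ∑ i : V, ∑ j : V, (if G.Adj i j then (x i + x j) ^ 2 else 0) = 0 := by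
      linarith [hq]
    intro i j hij
    have hnn : ∀ i ∈ Finset.univ (α := V),
        (0:ℝ) ≤ ∑ j : V, (if G.Adj i j then (x i + x j) ^ 2 else 0) := by
      intro i _
      exact Finset.sum_nonneg fun j _ => by positivity
    have h1 := (Finset.sum_eq_zero_iff_of_nonneg hnn).mp h0 i (Finset.mem_univ i)
    have h2 := (Finset.sum_eq_zero_iff_of_nonneg
      (fun j _ => by positivity)).mp h1 j (Finset.mem_univ j)
    rw [if_pos hij] at h2
    have := pow_eq_zero_iff (n := 2) (by norm_num) |>.mp h2
    linarith
  -- |x| is constant along walks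
  have habs : ∀ i j : V, G.Reachable i j → |x i| = |x j| := by
    intro i j ⟨w⟩
    induction w with
    | nil => rfl
    | cons h _ ih =>
      rw [← ih]
      rw [hadj _ _ h, abs_neg]
  -- if x is nonzero somewhere, it is nonzero everywhere, giving a 2-coloring
  by_contra hxne
  have ⟨w, hw⟩ : ∃ w, x w ≠ 0 := by
    by_contra h
    push_neg at h
    exact hxne (funext fun v => h v)
  have hall : ∀ v, x v ≠ 0 := by
    intro v
    have := habs w v (hconn.preconnected w v)
    intro h0
    rw [h0, abs_zero, abs_eq_zero] at this
    exact hw this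
  apply hnb
  refine ⟨⟨fun v => if 0 < x v then 0 else 1, ?_⟩⟩
  intro i j hij
  have hx' := hadj i j hij
  show (if 0 < x i then (0 : Fin 2) else 1) ≠ (if 0 < x j then 0 else 1)
  rcases lt_or_gt_of_ne (hall i) with hi | hi
  · have hj : 0 < x j := by rw [hx'] at hi; linarith
    simp [not_lt.mpr hi.le, hj]
  · have hj : x j < 0 := by rw [hx'] at hi; linarith
    simp [hi, not_lt.mpr hj.le]

lemma rootMultiplicity_pow' {R : Type*} [CommRing R] [IsDomain R] {p : R[X]}
    (hp : p ≠ 0) (n : ℕ) (a : R) :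
    (p ^ n).rootMultiplicity a = n * p.rootMultiplicity a := by
  induction n with
  | zero =>
    rw [pow_zero, Nat.zero_mul]
    exact Polynomial.rootMultiplicity_eq_zero (by simp [Polynomial.IsRoot])
  | succ n ih =>
    rw [pow_succ, Polynomial.rootMultiplicity_mul (mul_ne_zero (pow_ne_zero n hp) hp), ih]
    ring

end Aux

/-- For a connected simple non-bipartite graph `G` and `u ≠ 1`: the reciprocal of the
Bartholdi zeta function in `q` is the polynomial
`P = (1 − (1−u)²X²)^(n_E−n_V) · det(1 − XA + X²Q_u)`.  If `n_E > n_V` then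
`q = −(1−u)⁻¹` is a pole of `ζ_G(q,u)` of order exactly `n_E − n_V` (a root of `P` of
multiplicity `n_E − n_V`), and if `n_E = n_V` then `q = −(1−u)⁻¹` is not a pole
(not a root of `P`). -/
theorem pole_order_at_neg_one_sub_u_inv_nonbipartite
    {V : Type*} [Fintype V] [DecidableEq V]
    (G : SimpleGraph V) [DecidableRel G.Adj]
    (hconn : G.Connected) (hnb : ¬ G.Colorable 2)
    (u : ℝ) (hu : u ≠ 1)
    (A D Qu : Matrix V V ℝ)
    (hA : A = G.adjMatrix ℝ)
    (hD : D = Matrix.diagonal fun v => (G.degree v : ℝ))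
    (hQ : Qu = (1 - u) • (D - (1 - u) • (1 : Matrix V V ℝ)))
    (P : Polynomial ℝ)
    (hP : P = (1 - C ((1 - u) ^ 2) * X ^ 2) ^ (G.edgeFinset.card - Fintype.card V) *
      (Matrix.of fun i j : V =>
        C ((1 : Matrix V V ℝ) i j) - C (A i j) * X + C (Qu i j) * X ^ 2).det) :
    (G.edgeFinset.card > Fintype.card V →
      P.rootMultiplicity (-(1 - u)⁻¹) = G.edgeFinset.card - Fintype.card V) ∧
    (G.edgeFinset.card = Fintype.card V → P.eval (-(1 - u)⁻¹) ≠ 0) := by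
  have hu1 : (1 : ℝ) - u ≠ 0 := sub_ne_zero.mpr (Ne.symm hu)
  set q₀ : ℝ := -(1 - u)⁻¹ with hq₀
  set g : Polynomial ℝ := (Matrix.of fun i j : V =>
      C ((1 : Matrix V V ℝ) i j) - C (A i j) * X + C (Qu i j) * X ^ 2).det with hg
  -- evaluation of g at q₀
  have hgeval : g.eval q₀ =
      ((1 - u)⁻¹ • (G.degMatrix ℝ + G.adjMatrix ℝ)).det := by
    rw [hg, ← Polynomial.coe_evalRingHom, RingHom.map_det]
    congr 1
    ext i j
    simp only [RingHom.mapMatrix_apply, Matrix.map_apply, Matrix.of_apply,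
      Polynomial.coe_evalRingHom, Polynomial.eval_add, Polynomial.eval_sub,
      Polynomial.eval_mul, Polynomial.eval_pow, Polynomial.eval_C, Polynomial.eval_X]
    rw [hQ, hA, hD]
    simp only [Matrix.smul_apply, Matrix.add_apply, Matrix.sub_apply,
      SimpleGraph.degMatrix, Matrix.diagonal_apply, smul_eq_mul, hq₀]
    by_cases hij : i = j
    · subst hij
      simp only [Matrix.one_apply_eq, if_pos rfl, SimpleGraph.adjMatrix_apply,
        if_neg (G.loopless.irrefl i)]
      field_simp <;> ring
    · simp only [Matrix.one_apply_ne hij, if_neg hij]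
      field_simp <;> ring
  have hdetne : ((1 - u)⁻¹ • (G.degMatrix ℝ + G.adjMatrix ℝ)).det ≠ 0 := by
    intro hdet
    obtain ⟨v, hv, hmv⟩ := (Matrix.exists_mulVec_eq_zero_iff).mpr hdet
    rw [Matrix.smul_mulVec, smul_eq_zero] at hmv
    rcases hmv with h | h
    · exact inv_ne_zero hu1 h
    · exact hv (signless_ker G hconn hnb v h)
  have hgne : g.eval q₀ ≠ 0 := by rw [hgeval]; exact hdetne
  have hg0 : g ≠ 0 := fun h => hgne (by rw [h]; simp)
  -- the factor f
  set f : Polynomial ℝ := 1 - C ((1 - u) ^ 2) * X ^ 2 with hf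
  have hffact : f = (1 - C (1 - u) * X) * (1 + C (1 - u) * X) := by
    rw [hf]
    have h2 : (C ((1 - u) ^ 2) : ℝ[X]) = C (1 - u) ^ 2 := by rw [map_pow]
    rw [h2]; ring
  have hsecond : (1 + C (1 - u) * X : ℝ[X]) = C (1 - u) * (X - C q₀) := by
    have h1 : (C (1 - u) : ℝ[X]) * C ((1 - u)⁻¹) = 1 := by
      rw [← Polynomial.C_mul, mul_inv_cancel₀ hu1, Polynomial.C_1]
    rw [hq₀, Polynomial.C_neg]
    linear_combination -h1
  have hf0 : f ≠ 0 := by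
    intro h
    have := congrArg (Polynomial.eval 0) h
    simp [hf] at this
  have hfmult : f.rootMultiplicity q₀ = 1 := by
    rw [hffact, hsecond]
    have h1 : (1 - C (1 - u) * X : ℝ[X]) ≠ 0 := by
      intro h
      have := congrArg (Polynomial.eval 0) h
      simp at this
    have hCne : (C (1 - u) : ℝ[X]) ≠ 0 := Polynomial.C_ne_zero.mpr hu1
    have h2 : (C (1 - u) * (X - C q₀) : ℝ[X]) ≠ 0 :=
      mul_ne_zero hCne (Polynomial.X_sub_C_ne_zero q₀)
    rw [Polynomial.rootMultiplicity_mul (mul_ne_zero h1 h2)]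
    have ha : Polynomial.rootMultiplicity q₀ (1 - C (1 - u) * X) = 0 := by
      apply Polynomial.rootMultiplicity_eq_zero
      simp only [Polynomial.IsRoot, Polynomial.eval_sub, Polynomial.eval_one,
        Polynomial.eval_mul, Polynomial.eval_C, Polynomial.eval_X, hq₀]
      rw [mul_neg, mul_inv_cancel₀ hu1]
      norm_num
    have hb : Polynomial.rootMultiplicity q₀ (C (1 - u) * (X - C q₀)) = 1 := by
      rw [Polynomial.rootMultiplicity_mul h2,
        Polynomial.rootMultiplicity_eq_zero
          (by simpa [Polynomial.IsRoot] using hu1),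
        Polynomial.rootMultiplicity_X_sub_C_self]
    rw [ha, hb]
  constructor
  · intro hgt
    rw [hP]
    rw [Polynomial.rootMultiplicity_mul (mul_ne_zero (pow_ne_zero _ hf0) hg0),
      rootMultiplicity_pow' hf0, hfmult,
      Polynomial.rootMultiplicity_eq_zero (by exact hgne)]
    omega
  · intro heq
    rw [hP, heq, Nat.sub_self, pow_zero, one_mul]
    exact hgne
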